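/- Let N ≥ 1 and 1 ≤ k ≤ N be integers. Let A_k^{(N)} be the k×k lower-bidiagonal matrix with diagonal entries (A)_{i,i} = i for i = 1,…,k and subdiagonal entries (A)_{i+1,i} = (i+1)·i·(N−i) for i = 1,…,k−1 (all other entries zero), and let E_k^{(N)} be the k×k matrix with entries (E)_{i,j} = (−1)^{i−j} · binom(i,j) · ((i−1)!·(N−j)!)/((j−1)!·(N−i)!) for 1 ≤ i,j ≤ k (so E is lower triangular since binom(i,j)=0 for j>i). Then A_k^{(N)} · E_k^{(N)} = E_k^{(N)} · D_k where D_k = diag(1,2,…,k); in particular the eigenvalues of A_k^{(N)} are exactly 1, 2, …, k and the columns of E_k^{(N)} are corresponding eigenvectors. -/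

import Mathlib

/-- The lower-bidiagonal matrix `A_k^{(N)}` (1-based indices `i = (i₀ : Fin k) + 1`):
diagonal entries `i`, subdiagonal entries `(A)_{i+1,i} = (i+1)·i·(N-i)`. -/
def Amat (N k : ℕ) : Matrix (Fin k) (Fin k) ℝ :=
  Matrix.of fun i j =>
    if (i : ℕ) = (j : ℕ) then ((i : ℕ) + 1 : ℝ)
    else if (i : ℕ) = (j : ℕ) + 1 then
      ((j : ℕ) + 2 : ℝ) * ((j : ℕ) + 1 : ℝ) * ((N : ℝ) - ((j : ℕ) + 1))
    else 0

/-- The matrix `E_k^{(N)}` with entries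
`(E)_{i,j} = (-1)^{i-j} · binom(i,j) · ((i-1)!(N-j)!)/((j-1)!(N-i)!)` (1-based indices);
note `(-1)^{i-j} = (-1)^{i+j}`. -/
noncomputable def Emat (N k : ℕ) : Matrix (Fin k) (Fin k) ℝ :=
  Matrix.of fun i j =>
    (-1 : ℝ) ^ ((i : ℕ) + (j : ℕ)) * (Nat.choose ((i : ℕ) + 1) ((j : ℕ) + 1) : ℝ) *
      (((i : ℕ).factorial : ℝ) * ((N - ((j : ℕ) + 1)).factorial : ℝ)) /
      (((j : ℕ).factorial : ℝ) * ((N - ((i : ℕ) + 1)).factorial : ℝ))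

noncomputable def Eent (N a b : ℕ) : ℝ :=
  (-1 : ℝ) ^ (a + b) * (Nat.choose (a + 1) (b + 1) : ℝ) *
      ((a.factorial : ℝ) * ((N - (b + 1)).factorial : ℝ)) /
      ((b.factorial : ℝ) * ((N - (a + 1)).factorial : ℝ))

lemma choose_cast_id (a b : ℕ) :
    ((a : ℝ) - b) * (Nat.choose (a+1) (b+1) : ℝ) = ((a:ℝ)+1) * (Nat.choose a (b+1) : ℝ) := by
  rcases le_or_gt b a with h | h
  · have h1 := Nat.choose_mul_succ_eq a (b+1)
    have h2 : a + 1 - (b + 1) = a - b := by omega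
    rw [h2] at h1
    have h3 := congrArg (Nat.cast : ℕ → ℝ) h1
    push_cast [Nat.cast_sub h] at h3
    linarith
  · rw [Nat.choose_eq_zero_of_lt (by omega), Nat.choose_eq_zero_of_lt (by omega)]
    ring

lemma scalar_id (N a' b : ℕ) (haN : a' + 1 < N) :
    ((a':ℝ)+2) * Eent N (a'+1) b
      + (((a':ℝ)+2)*((a':ℝ)+1)*((N:ℝ)-((a':ℝ)+1))) * Eent N a' b
    = ((b:ℝ)+1) * Eent N (a'+1) b := by
  unfold Eent
  have hm : N - (a'+1) = (N - (a'+2)) + 1 := by omega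
  have hfac : ((N - (a'+1)).factorial : ℝ) = ((N:ℝ) - ((a':ℝ)+1)) * ((N - (a'+2)).factorial : ℝ) := by
    rw [hm, Nat.factorial_succ]
    push_cast
    have : ((N - (a'+2) : ℕ) : ℝ) = (N:ℝ) - (a':ℝ) - 2 := by
      push_cast [Nat.cast_sub (by omega : a' + 2 ≤ N)]; ring
    rw [this]; ring
  have hq : ((N - (a'+2)).factorial : ℝ) ≠ 0 := Nat.cast_ne_zero.2 (Nat.factorial_ne_zero _)
  have hb : ((b.factorial : ℝ)) ≠ 0 := Nat.cast_ne_zero.2 (Nat.factorial_ne_zero _)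
  have hmne : ((N:ℝ) - ((a':ℝ)+1)) ≠ 0 := by
    have : (a':ℝ) + 1 < N := by exact_mod_cast haN
    linarith
  have hch := choose_cast_id (a'+1) b
  push_cast at hch
  have hpow : (-1:ℝ)^(a'+1+b) = -(-1:ℝ)^(a'+b) := by
    rw [show a'+1+b = (a'+b)+1 by ring, pow_succ]; ring
  simp only [show a'+1+1 = a'+2 from rfl] at *
  rw [hfac, Nat.factorial_succ, hpow]
  push_cast
  field_simp
  linear_combination (-1:ℝ) * hch

lemma Emat_apply (N k : ℕ) (i j : Fin k) : Emat N k i j = Eent N i j := rfl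

lemma scalar_id0 (N b : ℕ) : Eent N 0 b = Eent N 0 b * ((b:ℝ)+1) := by
  rcases Nat.eq_zero_or_pos b with rfl | hb
  · norm_num
  · have h : Nat.choose 1 (b+1) = 0 := Nat.choose_eq_zero_of_lt (by omega)
    unfold Eent; rw [show (0:ℕ)+1 = 1 from rfl, h]; push_cast; ring

/-- `A_k^{(N)} · E_k^{(N)} = E_k^{(N)} · D_k` with `D_k = diag(1,…,k)`;
in particular the eigenvalues of `A_k^{(N)}` are exactly `1,…,k`, with the columns of
`E_k^{(N)}` as corresponding eigenvectors. -/
theorem Amat_mul_Emat (N k : ℕ) (hN : 1 ≤ N) (hk1 : 1 ≤ k) (hkN : k ≤ N) :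
    Amat N k * Emat N k =
        Emat N k * Matrix.diagonal (fun i : Fin k => ((i : ℕ) + 1 : ℝ)) ∧
      (∀ μ : ℝ, (Amat N k - μ • (1 : Matrix (Fin k) (Fin k) ℝ)).det = 0 ↔
        ∃ j : Fin k, μ = ((j : ℕ) + 1 : ℝ)) ∧
      ∀ j : Fin k,
        (Amat N k).mulVec (fun i => Emat N k i j) =
          ((j : ℕ) + 1 : ℝ) • fun i => Emat N k i j := by
  have hmul : Amat N k * Emat N k =
      Emat N k * Matrix.diagonal (fun i : Fin k => ((i : ℕ) + 1 : ℝ)) := by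
    ext i j
    rw [Matrix.mul_apply, Matrix.mul_diagonal]
    have hsplit : ∀ l : Fin k, Amat N k i l * Emat N k l j =
        (if l = i then ((i:ℕ)+1:ℝ) * Emat N k i j else 0) +
        (if (i:ℕ) = (l:ℕ)+1 then
          (((l:ℕ):ℝ)+2) * (((l:ℕ):ℝ)+1) * ((N:ℝ)-(((l:ℕ):ℝ)+1)) * Emat N k l j else 0) := by
      intro l
      by_cases h1 : (i:ℕ) = (l:ℕ)
      · have hl : l = i := Fin.ext h1.symm
        subst hl
        simp [Amat, h1]
      · have hne : l ≠ i := fun h => h1 (by rw [h])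
        by_cases h2 : (i:ℕ) = (l:ℕ)+1
        · simp [Amat, h1, h2, hne]
        · simp [Amat, h1, h2, hne]
    rw [Finset.sum_congr rfl (fun l _ => hsplit l), Finset.sum_add_distrib]
    rw [Finset.sum_ite_eq' Finset.univ i (fun _ => ((i:ℕ)+1:ℝ) * Emat N k i j)]
    simp only [Finset.mem_univ, if_true]
    by_cases hi0 : (i:ℕ) = 0
    · rw [Finset.sum_eq_zero (fun l _ => by
        rw [if_neg]; omega)]
      rw [add_zero, Emat_apply, hi0, ← scalar_id0 N (j:ℕ)]
      norm_num
    · -- i ≥ 1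
      set a' : ℕ := (i:ℕ) - 1 with ha'
      have hia : (i:ℕ) = a' + 1 := by omega
      have ha'k : a' < k := lt_trans (by omega : a' < (i:ℕ)) i.2
      set i' : Fin k := ⟨a', ha'k⟩ with hi'
      have hsum2 : ∑ l : Fin k, (if (i:ℕ) = (l:ℕ)+1 then
          (((l:ℕ):ℝ)+2) * (((l:ℕ):ℝ)+1) * ((N:ℝ)-(((l:ℕ):ℝ)+1)) * Emat N k l j else 0)
          = (((a':ℕ):ℝ)+2) * (((a':ℕ):ℝ)+1) * ((N:ℝ)-(((a':ℕ):ℝ)+1)) * Emat N k i' j := by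
        rw [Finset.sum_eq_single i']
        · rw [if_pos (by simp [hi', hia])]
        · intro l _ hl
          rw [if_neg]
          intro hc
          apply hl
          apply Fin.ext
          show (l:ℕ) = a'
          omega
        · intro h; exact absurd (Finset.mem_univ i') h
      rw [hsum2, Emat_apply, Emat_apply]
      simp only [show ((i' : Fin k) : ℕ) = a' from rfl, hia]
      have haN : a' + 1 < N := by
        have := i.2; omega
      push_cast
      linear_combination scalar_id N a' (j:ℕ) haN
  refine ⟨hmul, ?_, ?_⟩
  · intro μ
    have htri : ((Amat N k - μ • (1 : Matrix (Fin k) (Fin k) ℝ))).BlockTriangular OrderDual.toDual := by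
      intro i l h
      have hil : (i:Fin k) < l := h
      have hlt : (i:ℕ) < (l:ℕ) := hil
      have h1 : ¬ (i:ℕ) = (l:ℕ) := by omega
      have h2 : ¬ (i:ℕ) = (l:ℕ)+1 := by omega
      simp [Amat, Matrix.sub_apply, Matrix.smul_apply, Matrix.one_apply, h1, h2, Fin.ext_iff]
    rw [Matrix.det_of_lowerTriangular _ htri]
    rw [Finset.prod_eq_zero_iff]
    constructor
    · rintro ⟨i, -, hi⟩
      refine ⟨i, ?_⟩
      simp [Amat, Matrix.sub_apply, Matrix.smul_apply, Matrix.one_apply] at hi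
      linarith [hi]
    · rintro ⟨i, rfl⟩
      exact ⟨i, Finset.mem_univ i, by
        simp [Amat, Matrix.sub_apply, Matrix.smul_apply, Matrix.one_apply]⟩
  · intro j
    funext i
    have h1 : (Amat N k).mulVec (fun i => Emat N k i j) i = (Amat N k * Emat N k) i j := by
      rw [Matrix.mul_apply]; rfl
    rw [h1, hmul, Matrix.mul_diagonal]
    simp [Pi.smul_apply]
    ring
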